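/- For always-takers and never-takers the instrument has no effect on the outcome distribution: for every y ∈ ℝ, E[1{Y ≤ y}·1{W1 = W0} | Z = 1] = E[1{Y ≤ y}·1{W1 = W0} | Z = 0]. -/

import Mathlib

open MeasureTheory ProbabilityTheory

/-- Conditional mean given an event: `E[U | A] := E[U · 1_A] / P(A)`. -/
noncomputable def condMean {Ω : Type*} [MeasurableSpace Ω] (P : Measure Ω)
    (U : Ω → ℝ) (A : Set Ω) : ℝ :=
  (∫ ω in A, U ω ∂P) / (P A).toReal

/-- For always-takers and never-takers (`W1 = W0`), the instrument has no effect on the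
outcome distribution. -/
theorem instrument_no_effect_on_noncompliers
    {Ω : Type*} [MeasurableSpace Ω] (P : Measure Ω) [IsProbabilityMeasure P]
    (Z W0 W1 Y0 Y1 : Ω → ℝ)
    (hZ : Measurable Z) (hW0 : Measurable W0) (hW1 : Measurable W1)
    (hY0 : Measurable Y0) (hY1 : Measurable Y1)
    (hZbin : ∀ ω, Z ω = 0 ∨ Z ω = 1)
    (hW0bin : ∀ ω, W0 ω = 0 ∨ W0 ω = 1)
    (hW1bin : ∀ ω, W1 ω = 0 ∨ W1 ω = 1)
    (W Y : Ω → ℝ)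
    (hWdef : ∀ ω, W ω = Z ω * W1 ω + (1 - Z ω) * W0 ω)
    (hYdef : ∀ ω, Y ω = W ω * Y1 ω + (1 - W ω) * Y0 ω)
    (hindep : IndepFun Z (fun ω => (Y0 ω, Y1 ω, W0 ω, W1 ω)) P)
    (hoverlap : 0 < P {ω | Z ω = 1} ∧ P {ω | Z ω = 1} < 1) :
    ∀ y : ℝ,
      condMean P
          (fun ω => (if Y ω ≤ y then (1 : ℝ) else 0) * (if W1 ω = W0 ω then (1 : ℝ) else 0))
          {ω | Z ω = 1}
      = condMean P
          (fun ω => (if Y ω ≤ y then (1 : ℝ) else 0) * (if W1 ω = W0 ω then (1 : ℝ) else 0))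
          {ω | Z ω = 0} := by
  intro y
  -- the measurable function of the potential outcomes/treatments
  set φ : ℝ × ℝ × ℝ × ℝ → ℝ := fun p =>
    (if p.2.2.1 * p.2.1 + (1 - p.2.2.1) * p.1 ≤ y then (1 : ℝ) else 0) *
      (if p.2.2.2 = p.2.2.1 then (1 : ℝ) else 0) with hφdef
  have hφmeas : Measurable φ := by
    apply Measurable.mul
    · exact Measurable.ite
        (measurableSet_le (by fun_prop) measurable_const) measurable_const measurable_const
    · exact Measurable.ite
        (measurableSet_eq_fun (by fun_prop) (by fun_prop)) measurable_const measurable_const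
  set V : Ω → ℝ × ℝ × ℝ × ℝ := fun ω => (Y0 ω, Y1 ω, W0 ω, W1 ω) with hVdef
  have hVmeas : Measurable V := by fun_prop
  -- the integrand equals φ ∘ V
  have hEq : ∀ ω, (if Y ω ≤ y then (1 : ℝ) else 0) * (if W1 ω = W0 ω then (1 : ℝ) else 0)
      = φ (V ω) := by
    intro ω
    by_cases h : W1 ω = W0 ω
    · have hW : W ω = W0 ω := by rw [hWdef ω, h]; ring
      have hY : Y ω = W0 ω * Y1 ω + (1 - W0 ω) * Y0 ω := by rw [hYdef ω, hW]
      simp only [hφdef, hVdef, h, hY, if_pos rfl]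
    · simp only [hφdef, hVdef, if_neg h, mul_zero]
  have hg : Measurable (φ ∘ V) := hφmeas.comp hVmeas
  have hφbd : ∀ p, ‖φ p‖ ≤ 1 := by
    intro p
    simp only [hφdef, Real.norm_eq_abs]
    split_ifs <;> norm_num
  have hgint : Integrable (φ ∘ V) P := by
    apply Integrable.mono' (integrable_const (1 : ℝ)) hg.aestronglyMeasurable
    filter_upwards with ω
    exact hφbd (V ω)
  -- for each c, the set integral over {Z = c} factors
  have key : ∀ c : ℝ, ∫ ω in {ω | Z ω = c}, φ (V ω) ∂P
      = (∫ ω, φ (V ω) ∂P) * (P {ω | Z ω = c}).toReal := by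
    intro c
    have hA : MeasurableSet {ω | Z ω = c} := hZ (measurableSet_singleton c)
    have hψ : Measurable (fun t : ℝ => if t = c then (1 : ℝ) else 0) :=
      Measurable.ite (measurableSet_singleton c) measurable_const measurable_const
    have hind : IndepFun ((fun t : ℝ => if t = c then (1 : ℝ) else 0) ∘ Z) (φ ∘ V) P :=
      hindep.comp hψ hφmeas
    have hψint : Integrable ((fun t : ℝ => if t = c then (1 : ℝ) else 0) ∘ Z) P := by
      apply Integrable.mono' (integrable_const (1 : ℝ)) (hψ.comp hZ).aestronglyMeasurable
      filter_upwards with ω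
      by_cases h : Z ω = c <;> simp [Function.comp, h]
    have h1 : ∫ ω in {ω | Z ω = c}, φ (V ω) ∂P
        = ∫ ω, (((fun t : ℝ => if t = c then (1 : ℝ) else 0) ∘ Z) * (φ ∘ V)) ω ∂P := by
      rw [← integral_indicator hA]
      congr 1
      ext ω
      by_cases h : Z ω = c <;>
        simp [Set.indicator, h, Function.comp]
    rw [h1, IndepFun.integral_mul_eq_mul_integral hind hψint.1 hgint.1]
    have h2 : ∫ ω, ((fun t : ℝ => if t = c then (1 : ℝ) else 0) ∘ Z) ω ∂P
        = (P {ω | Z ω = c}).toReal := by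
      have : ((fun t : ℝ => if t = c then (1 : ℝ) else 0) ∘ Z)
          = Set.indicator {ω | Z ω = c} (fun _ => (1 : ℝ)) := by
        ext ω; by_cases h : Z ω = c <;> simp [Set.indicator, h, Function.comp]
      rw [this, integral_indicator_const _ hA]
      simp [mul_comm, Measure.real]
    rw [h2, mul_comm]
    rfl
  have hP0 : P {ω | Z ω = 0} = 1 - P {ω | Z ω = 1} := by
    have hcompl : {ω | Z ω = 0} = {ω | Z ω = 1}ᶜ := by
      ext ω
      rcases hZbin ω with h | h <;> simp [h]
    have hm : MeasurableSet {ω | Z ω = 1} := hZ (measurableSet_singleton 1)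
    rw [hcompl, measure_compl hm (measure_ne_top P _), measure_univ]
  have hP1pos : (P {ω | Z ω = 1}).toReal ≠ 0 := by
    have := hoverlap.1
    simp only [ne_eq, ENNReal.toReal_eq_zero_iff]
    push_neg
    exact ⟨this.ne', measure_ne_top P _⟩
  have hP0pos : (P {ω | Z ω = 0}).toReal ≠ 0 := by
    rw [hP0]
    have h1 : P {ω | Z ω = 1} < 1 := hoverlap.2
    have : 0 < 1 - P {ω | Z ω = 1} := tsub_pos_of_lt h1
    simp only [ne_eq, ENNReal.toReal_eq_zero_iff]
    push_neg
    refine ⟨this.ne', ?_⟩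
    exact (lt_of_le_of_lt (tsub_le_self) (by norm_num)).ne
  unfold condMean
  simp only [hEq]
  rw [key 1, key 0, mul_div_assoc, mul_div_assoc,
    div_self hP1pos, div_self hP0pos]
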